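/- For every real γ > 0 there exists a constant C > 0 such that for every real ε with 0 < ε < e^{−1} there exist a natural number K ≥ 1, a natural number N ≥ 1, and a real h with 0 < h ≤ 1 satisfying exp(−2γK) + h² + 1/N ≤ ε² and N · K · h^{−1} ≤ C · ε^{−3} · log(1/ε). -/
import Mathlib


open Real

/-- Complexity of the projected particle method: the parameters `K` (truncation
level), `N` (number of particles) and `h` (time step) can be chosen so that the
MSE bound `exp(-2γK) + h² + 1/N` is at most `ε²` while the computational cost
`N·K·h⁻¹` is of order `ε⁻³ log(1/ε)`. -/
theorem projected_particle_complexity (γ : ℝ) (hγ : 0 < γ) :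
    ∃ C : ℝ, 0 < C ∧ ∀ ε : ℝ, 0 < ε → ε < Real.exp (-1) →
      ∃ (K N : ℕ) (h : ℝ), 1 ≤ K ∧ 1 ≤ N ∧ 0 < h ∧ h ≤ 1 ∧
        Real.exp (-2 * γ * K) + h ^ 2 + 1 / N ≤ ε ^ 2 ∧
        (N : ℝ) * K * h⁻¹ ≤ C * ε⁻¹ ^ 3 * Real.log (1 / ε) := by
  have hlog3 : (0:ℝ) ≤ Real.log 3 := Real.log_nonneg (by norm_num)
  obtain ⟨c, hc⟩ : ∃ c : ℝ, c = (Real.log 3 + 2) / (2 * γ) + 1 := ⟨_, rfl⟩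
  have hc0 : 0 < c := by
    have : 0 ≤ (Real.log 3 + 2) / (2 * γ) := by positivity
    rw [hc]; linarith
  refine ⟨8 * c, by linarith, ?_⟩
  intro ε hε hεe
  have hε1 : ε < 1 := lt_trans hεe (by
    have := Real.exp_lt_one_iff.mpr (show (-1:ℝ) < 0 by norm_num); linarith)
  have hεinv : 1 < ε⁻¹ := by rw [show ε⁻¹ = 1/ε by rw [one_div]]; exact one_lt_one_div hε hε1
  have hL : Real.log (1 / ε) = Real.log ε⁻¹ := by rw [one_div]
  have hL1 : 1 < Real.log ε⁻¹ := by
    have := Real.log_lt_log hε hεe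
    rw [Real.log_exp] at this
    rw [Real.log_inv]; linarith
  obtain ⟨L, hLdef⟩ : ∃ L : ℝ, L = Real.log ε⁻¹ := ⟨_, rfl⟩
  have h3pos : (1:ℝ) < 3 * ε⁻¹ ^ 2 := by nlinarith
  have hlogA : Real.log (3 * ε⁻¹ ^ 2) = Real.log 3 + 2 * L := by
    rw [Real.log_mul (by norm_num) (by positivity), Real.log_pow]
    rw [← hLdef]; push_cast; ring
  refine ⟨⌈Real.log (3 * ε⁻¹ ^ 2) / (2 * γ)⌉₊, ⌈3 * ε⁻¹ ^ 2⌉₊, ε / 2, ?_, ?_, by positivity,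
    by linarith, ?_, ?_⟩
  · rw [Nat.one_le_ceil_iff]
    exact div_pos (Real.log_pos h3pos) (by linarith)
  · rw [Nat.one_le_ceil_iff]; linarith
  · -- MSE bound
    have hKge : Real.log (3 * ε⁻¹ ^ 2) / (2 * γ) ≤ (⌈Real.log (3 * ε⁻¹ ^ 2) / (2 * γ)⌉₊ : ℝ) :=
      Nat.le_ceil _
    have hexp : Real.exp (-2 * γ * (⌈Real.log (3 * ε⁻¹ ^ 2) / (2 * γ)⌉₊ : ℕ)) ≤ ε ^ 2 / 3 := by
      have h1 : Real.log (3 * ε⁻¹ ^ 2) ≤ 2 * γ * (⌈Real.log (3 * ε⁻¹ ^ 2) / (2 * γ)⌉₊ : ℝ) := by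
        rw [div_le_iff₀ (by linarith)] at hKge; linarith
      have h2 : Real.exp (-2 * γ * (⌈Real.log (3 * ε⁻¹ ^ 2) / (2 * γ)⌉₊ : ℝ))
          ≤ Real.exp (-Real.log (3 * ε⁻¹ ^ 2)) := Real.exp_le_exp.mpr (by linarith)
      have h3 : Real.exp (-Real.log (3 * ε⁻¹ ^ 2)) = ε ^ 2 / 3 := by
        rw [Real.exp_neg, Real.exp_log (by positivity)]
        field_simp
      rw [← h3]; exact h2
    have hNge : 3 * ε⁻¹ ^ 2 ≤ (⌈3 * ε⁻¹ ^ 2⌉₊ : ℝ) := Nat.le_ceil _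
    have hNpos : (0:ℝ) < (⌈3 * ε⁻¹ ^ 2⌉₊ : ℝ) := by positivity
    have hNinv : 1 / (⌈3 * ε⁻¹ ^ 2⌉₊ : ℝ) ≤ ε ^ 2 / 3 := by
      rw [div_le_div_iff₀ hNpos (by norm_num)]
      calc (1:ℝ) * 3 = 3 := by ring
        _ ≤ ε ^ 2 * (3 * ε⁻¹ ^ 2) := by
            have : ε ^ 2 * (3 * ε⁻¹ ^ 2) = 3 := by field_simp
            linarith
        _ ≤ ε ^ 2 * (⌈3 * ε⁻¹ ^ 2⌉₊ : ℝ) := by nlinarith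
    have hh : (ε / 2) ^ 2 ≤ ε ^ 2 / 3 := by nlinarith
    linarith
  · -- cost bound
    have hNle : (⌈3 * ε⁻¹ ^ 2⌉₊ : ℝ) ≤ 4 * ε⁻¹ ^ 2 := by
      have := Nat.ceil_lt_add_one (show (0:ℝ) ≤ 3 * ε⁻¹ ^ 2 by positivity)
      nlinarith
    have hKle : (⌈Real.log (3 * ε⁻¹ ^ 2) / (2 * γ)⌉₊ : ℝ) ≤ c * L := by
      have h1 := Nat.ceil_lt_add_one
        (show (0:ℝ) ≤ Real.log (3 * ε⁻¹ ^ 2) / (2 * γ) from div_nonneg (Real.log_nonneg h3pos.le) (by linarith))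
      have h2 : Real.log (3 * ε⁻¹ ^ 2) / (2 * γ) + 1 ≤ c * L := by
        rw [hlogA, hc]
        have hA : (Real.log 3 + 2 * L) / (2 * γ) ≤ (Real.log 3 * L + 2 * L) / (2 * γ) := by
          gcongr
          nlinarith
        have hB : ((Real.log 3 + 2) / (2 * γ) + 1) * L
            = (Real.log 3 * L + 2 * L) / (2 * γ) + L := by ring
        rw [hB]; linarith
      linarith
    have hinv : (ε / 2)⁻¹ = 2 * ε⁻¹ := by
      field_simp
    rw [hinv, hL, ← hLdef]
    calc (⌈3 * ε⁻¹ ^ 2⌉₊ : ℝ) * (⌈Real.log (3 * ε⁻¹ ^ 2) / (2 * γ)⌉₊ : ℝ) * (2 * ε⁻¹)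
        ≤ (4 * ε⁻¹ ^ 2) * (c * L) * (2 * ε⁻¹) := by
          have h1 : (0:ℝ) ≤ (⌈3 * ε⁻¹ ^ 2⌉₊ : ℝ) := by positivity
          have h2 : (0:ℝ) ≤ (⌈Real.log (3 * ε⁻¹ ^ 2) / (2 * γ)⌉₊ : ℝ) := by positivity
          have h3 : (0:ℝ) ≤ 2 * ε⁻¹ := by positivity
          have h4 : (0:ℝ) ≤ 4 * ε⁻¹ ^ 2 := by positivity
          exact mul_le_mul (mul_le_mul hNle hKle h2 h4) le_rfl h3 (by nlinarith)
      _ = 8 * c * ε⁻¹ ^ 3 * L := by ring
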